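/- arXiv:1908.07676 — 2 statements merged into one kernel-verified Lean document; each statement's English description precedes it below -/
import Mathlib

section
/- Let (X,d) be a compact metric space and f_{0,∞} = {f_n}_{n=0}^∞ a sequence of continuous self-maps of X. If (X, f_{0,∞}) is weakly mixing of all orders, then the induced system (𝓜(X), f̂_{0,∞}) is weakly mixing of all orders. -/
open MeasureTheory Filter

/-- `nacomp f n = f_{n-1} ∘ ⋯ ∘ f_0` (with `nacomp f 0 = id`): the time-`n` map of the
non-autonomous system `(X, f_{0,∞})`. -/
def nacomp {Y : Type*} (f : ℕ → Y → Y) : ℕ → Y → Y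
  | 0 => id
  | n + 1 => f n ∘ nacomp f n

/-- The induced pushforward map `f̂` on the space `𝓜(X)` of Borel probability measures,
equipped with the Lévy–Prokhorov metric. -/
noncomputable def inducedMap {X : Type*} [MetricSpace X] [MeasurableSpace X] [BorelSpace X]
    (f : X → X) (hf : Continuous f) :
    LevyProkhorov (ProbabilityMeasure X) → LevyProkhorov (ProbabilityMeasure X) :=
  fun μ => (LevyProkhorov.toMeasureEquiv (α := ProbabilityMeasure X)).symm
    (((LevyProkhorov.toMeasureEquiv (α := ProbabilityMeasure X)) μ).map hf.measurable.aemeasurable)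

open Metric Set ENNReal NNReal

lemma nacomp_continuous {Y : Type*} [TopologicalSpace Y] (f : ℕ → Y → Y)
    (hf : ∀ n, Continuous (f n)) : ∀ k, Continuous (nacomp f k)
  | 0 => continuous_id
  | k + 1 => (hf k).comp (nacomp_continuous f hf k)

section UnifM
variable {X : Type*} [MeasurableSpace X]

noncomputable def unifM {ι : Type*} [Fintype ι] (x : ι → X) : Measure X :=
  (Fintype.card ι : ℝ≥0∞)⁻¹ • ∑ j : ι, Measure.dirac (x j)

lemma unifM_apply {ι : Type*} [Fintype ι] (x : ι → X) (B : Set X) :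
    unifM x B = (Fintype.card ι : ℝ≥0∞)⁻¹ * ∑ j : ι, Measure.dirac (x j) B := by
  simp [unifM]

lemma isProbabilityMeasure_unifM {ι : Type*} [Fintype ι] [Nonempty ι] (x : ι → X) :
    IsProbabilityMeasure (unifM x) := by
  constructor
  rw [unifM_apply]
  simp only [Measure.dirac_apply_of_mem (Set.mem_univ _), Finset.sum_const, Finset.card_univ,
    nsmul_eq_mul, mul_one]
  exact ENNReal.inv_mul_cancel (by exact_mod_cast Fintype.card_ne_zero) (by simp)

lemma unifM_map {Y : Type*} [MeasurableSpace Y] {ι : Type*} [Fintype ι] (x : ι → X)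
    {g : X → Y} (hg : Measurable g) : (unifM x).map g = unifM (g ∘ x) := by
  simp only [unifM, ← Measure.mapₗ_apply_of_measurable hg, LinearMap.map_smul, map_sum]
  congr 1
  refine Finset.sum_congr rfl fun j _ => ?_
  rw [Measure.mapₗ_apply_of_measurable hg, Measure.map_dirac' hg]
  rfl

lemma unifM_comp_equiv {ι κ : Type*} [Fintype ι] [Fintype κ] (e : κ ≃ ι) (x : ι → X) :
    unifM (x ∘ e) = unifM x := by
  simp only [unifM, Fintype.card_congr e]
  congr 1
  exact Equiv.sum_comp e (fun j => Measure.dirac (x j))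

lemma unifM_comp_fst {ι κ : Type*} [Fintype ι] [Fintype κ] [Nonempty κ] (x : ι → X) :
    unifM (fun p : ι × κ => x p.1) = unifM x := by
  have h1 : ∑ p : ι × κ, Measure.dirac (x p.1)
      = (Fintype.card κ : ℝ≥0∞) • ∑ i : ι, Measure.dirac (x i) := by
    rw [Fintype.sum_prod_type, Finset.smul_sum]
    refine Finset.sum_congr rfl fun i _ => ?_
    simp [Finset.sum_const, Nat.cast_smul_eq_nsmul]
  rw [unifM, unifM, h1, smul_smul, Fintype.card_prod, Nat.cast_mul,
    ENNReal.mul_inv (by simp) (by simp), mul_assoc,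
    ENNReal.inv_mul_cancel (by exact_mod_cast Fintype.card_ne_zero) (by simp), mul_one]

lemma unifM_comp_snd {ι κ : Type*} [Fintype ι] [Fintype κ] [Nonempty ι] (y : κ → X) :
    unifM (fun p : ι × κ => y p.2) = unifM y := by
  have := unifM_comp_equiv (X := X) (Equiv.prodComm ι κ) (fun p : κ × ι => y p.1)
  simp only [Function.comp_def, Equiv.prodComm_apply, Prod.fst_swap] at this
  rw [this]
  exact unifM_comp_fst y

end UnifM

section Pert
variable {X : Type*} [MetricSpace X] [MeasurableSpace X] [OpensMeasurableSpace X]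

lemma levyProkhorovDist_unifM_le {ι : Type*} [Fintype ι] [Nonempty ι]
    (x y : ι → X) {δ : ℝ} (hδ : 0 ≤ δ) (hxy : ∀ j, dist (x j) (y j) < δ) :
    levyProkhorovDist (unifM x) (unifM y) ≤ δ := by
  haveI := isProbabilityMeasure_unifM x
  haveI := isProbabilityMeasure_unifM y
  refine levyProkhorovDist_le_of_forall_le _ _ hδ fun ε B hε hB => ?_
  refine le_add_right ?_
  rw [unifM_apply, unifM_apply]
  refine mul_le_mul_right (Finset.sum_le_sum fun j _ => ?_) _
  rw [Measure.dirac_apply' _ hB,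
    Measure.dirac_apply' _ (isOpen_thickening.measurableSet)]
  by_cases hj : x j ∈ B
  · have : y j ∈ thickening ε B := by
      rw [mem_thickening_iff]
      exact ⟨x j, hj, by rw [dist_comm]; exact (hxy j).trans hε⟩
    simp [hj, this]
  · simp [hj]
end Pert
lemma exists_unifM_close {X : Type*} [MetricSpace X] [CompactSpace X] [Nonempty X]
    [MeasurableSpace X] [OpensMeasurableSpace X]
    (μ : ProbabilityMeasure X) {δ : ℝ} (hδ : 0 < δ) :
    ∃ (m : ℕ) (_ : 0 < m) (x : Fin m → X),
      levyProkhorovDist (unifM x) μ.toMeasure ≤ δ := by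
  classical
  -- finite cover of X by δ-balls
  obtain ⟨t, ht⟩ := IsCompact.elim_finite_subcover isCompact_univ (fun a : X => ball a δ)
    (fun a => isOpen_ball) (fun z _ => mem_iUnion.mpr ⟨z, mem_ball_self hδ⟩)
  set p := t.card with hpdef
  have hp : 0 < p := by
    rcases mem_iUnion₂.mp (ht (mem_univ (Classical.arbitrary X))) with ⟨b, hb, -⟩
    exact Finset.card_pos.mpr ⟨b, hb⟩
  set e := t.equivFin with hedef
  set a : Fin p → X := fun i => (e.symm i : X) with hadef
  -- disjointified pieces
  set A : Fin p → Set X := fun i => ball (a i) δ \ ⋃ (j : Fin p) (_ : j < i), ball (a j) δ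
    with hAdef
  have hAm : ∀ i, MeasurableSet (A i) := fun i =>
    measurableSet_ball.diff
      (MeasurableSet.iUnion fun j => MeasurableSet.iUnion fun _ => measurableSet_ball)
  have hAsub : ∀ i, A i ⊆ ball (a i) δ := fun i => diff_subset
  have key : ∀ {i j : Fin p}, i < j → Disjoint (A i) (A j) := by
    intro i j hij
    refine Set.disjoint_left.mpr fun z hzi hzj => hzj.2 ?_
    exact mem_iUnion.mpr ⟨i, mem_iUnion.mpr ⟨hij, hAsub i hzi⟩⟩
  have hAdisj : Pairwise (Function.onFun Disjoint A) := by
    intro i j hij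
    rcases hij.lt_or_gt with h | h
    · exact key h
    · exact (key h).symm
  have hAcover : ∀ z : X, ∃ i, z ∈ A i := by
    intro z
    have hz := ht (mem_univ z)
    rw [mem_iUnion₂] at hz
    obtain ⟨b, hb, hzb⟩ := hz
    set S : Finset (Fin p) := Finset.univ.filter fun i => z ∈ ball (a i) δ with hSdef
    have hS : S.Nonempty := by
      refine ⟨e ⟨b, hb⟩, ?_⟩
      simp only [hSdef, Finset.mem_filter, Finset.mem_univ, true_and, hadef,
        Equiv.symm_apply_apply]
      exact hzb
    refine ⟨S.min' hS, ?_, ?_⟩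
    · have := S.min'_mem hS
      simp only [hSdef, Finset.mem_filter] at this
      exact this.2
    · intro hmem
      rw [mem_iUnion] at hmem
      obtain ⟨j, hj⟩ := hmem
      rw [mem_iUnion] at hj
      obtain ⟨hjlt, hzj⟩ := hj
      have : S.min' hS ≤ j := S.min'_le j (by simp only [hSdef, Finset.mem_filter, Finset.mem_univ, true_and]; exact hzj)
      exact absurd hjlt (not_lt.mpr this)
  have hsum : ∑ i, μ.toMeasure (A i) = 1 := by
    rw [← tsum_fintype (L := SummationFilter.unconditional _), ← measure_iUnion hAdisj hAm]
    rw [iUnion_eq_univ_iff.mpr fun z => hAcover z]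
    exact measure_univ
  -- nonneg real weights
  set w : Fin p → ℝ≥0 := fun i => μ (A i) with hwdef
  have hw : ∀ i, (w i : ℝ≥0∞) = μ.toMeasure (A i) := fun i =>
    μ.ennreal_coeFn_eq_coeFn_toMeasure (A i)
  have hw1 : ∑ i, w i = 1 := by
    have : ((∑ i, w i : ℝ≥0) : ℝ≥0∞) = 1 := by
      push_cast
      simp_rw [hw]
      exact hsum
    exact_mod_cast this
  -- number of atoms
  set N : ℕ := max 1 ⌈(p : ℝ) / δ⌉₊ with hNdef
  have hN1 : 1 ≤ N := le_max_left _ _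
  have hNp : (p : ℝ) ≤ N * δ := by
    have h1 : (p : ℝ) / δ ≤ N := (Nat.le_ceil _).trans (by exact_mod_cast le_max_right _ _)
    calc (p : ℝ) = (p : ℝ) / δ * δ := by field_simp
    _ ≤ N * δ := by nlinarith
  set k : Fin p → ℕ := fun i => ⌊(N : ℝ≥0) * w i⌋₊ with hkdef
  have hk_le : ∀ i, (k i : ℝ≥0) ≤ (N : ℝ≥0) * w i := fun i => Nat.floor_le zero_le
  have hk_ge : ∀ i, (N : ℝ≥0) * w i ≤ (k i : ℝ≥0) + 1 := fun i =>
    (Nat.lt_floor_add_one _).le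
  have hkN : ∑ i, k i ≤ N := by
    have : ((∑ i, k i : ℕ) : ℝ≥0) ≤ (N : ℝ≥0) := by
      push_cast
      calc ∑ i, (k i : ℝ≥0) ≤ ∑ i, (N : ℝ≥0) * w i := Finset.sum_le_sum fun i _ => hk_le i
      _ = (N : ℝ≥0) * ∑ i, w i := by rw [Finset.mul_sum]
      _ = N := by rw [hw1, mul_one]
    exact_mod_cast this
  set r : ℕ := N - ∑ i, k i with hrdef
  have hr_card : ∑ i, k i + r = N := Nat.add_sub_cancel' hkN
  have hrp : (r : ℝ) ≤ p := by
    have hN_le : (N : ℝ≥0) ≤ (∑ i, k i : ℝ≥0) + p := by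
      calc (N : ℝ≥0) = (N : ℝ≥0) * ∑ i, w i := by rw [hw1, mul_one]
      _ = ∑ i, (N : ℝ≥0) * w i := by rw [Finset.mul_sum]
      _ ≤ ∑ i, ((k i : ℝ≥0) + 1) := Finset.sum_le_sum fun i _ => hk_ge i
      _ = (∑ i, (k i : ℝ≥0)) + p := by
          rw [Finset.sum_add_distrib]
          simp
    have hN_le' : N ≤ ∑ i, k i + p := by exact_mod_cast hN_le
    have : r ≤ p := by omega
    exact_mod_cast this
  -- the atom index type
  set ι : Type := (Σ i : Fin p, Fin (k i)) ⊕ Fin r with hιdef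
  have hcard : Fintype.card ι = N := by
    simp only [hιdef, Fintype.card_sum, Fintype.card_sigma, Fintype.card_fin]
    exact hr_card
  haveI hne : Nonempty ι := Fintype.card_pos_iff.mp (by rw [hcard]; omega)
  set i₀ : Fin p := ⟨0, hp⟩ with hi₀def
  set x : ι → X := Sum.elim (fun s => a s.1) (fun _ => a i₀) with hxdef
  haveI := isProbabilityMeasure_unifM x
  have hN0 : (N : ℝ≥0∞) ≠ 0 := Nat.cast_ne_zero.mpr (by omega)
  have hNtop : (N : ℝ≥0∞) ≠ ⊤ := by simp
  have main : levyProkhorovDist (unifM x) μ.toMeasure ≤ δ := by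
    refine levyProkhorovDist_le_of_forall_le _ _ hδ.le fun ε B hε hB => ?_
    have hxB : unifM x B
        = (N : ℝ≥0∞)⁻¹ * (∑ i, (k i : ℝ≥0∞) * Measure.dirac (a i) B
            + (r : ℝ≥0∞) * Measure.dirac (a i₀) B) := by
      rw [unifM_apply, hcard]
      congr 1
      rw [Fintype.sum_sum_type]
      congr 1
      · rw [← Finset.univ_sigma_univ, Finset.sum_sigma]
        refine Finset.sum_congr rfl fun i _ => ?_
        simp [hxdef, Finset.sum_const, nsmul_eq_mul]
      · simp [hxdef, Finset.sum_const, nsmul_eq_mul]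
    set T : Finset (Fin p) := Finset.univ.filter fun i => a i ∈ B with hTdef
    have hsum_eq : ∑ i, (k i : ℝ≥0∞) * Measure.dirac (a i) B = ∑ i ∈ T, (k i : ℝ≥0∞) := by
      rw [Finset.sum_filter]
      refine Finset.sum_congr rfl fun i _ => ?_
      rw [Measure.dirac_apply' _ hB]
      by_cases hiB : a i ∈ B <;> simp [hiB]
    have hTsub : (⋃ i ∈ T, A i) ⊆ thickening ε B := by
      intro z hz
      rw [mem_iUnion₂] at hz
      obtain ⟨i, hiT, hzi⟩ := hz
      have haiB : a i ∈ B := by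
        simpa [hTdef] using hiT
      rw [mem_thickening_iff]
      exact ⟨a i, haiB, (mem_ball.mp (hAsub i hzi)).trans hε⟩
    have hTbound : ∑ i ∈ T, (k i : ℝ≥0∞)
        ≤ (N : ℝ≥0∞) * μ.toMeasure (thickening ε B) := by
      calc ∑ i ∈ T, (k i : ℝ≥0∞) ≤ ∑ i ∈ T, (N : ℝ≥0∞) * (w i : ℝ≥0∞) := by
            refine Finset.sum_le_sum fun i _ => ?_
            have := hk_le i
            calc (k i : ℝ≥0∞) = ((k i : ℝ≥0) : ℝ≥0∞) := by norm_cast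
            _ ≤ (((N : ℝ≥0) * w i : ℝ≥0) : ℝ≥0∞) := by exact_mod_cast this
            _ = (N : ℝ≥0∞) * (w i : ℝ≥0∞) := by push_cast; ring
      _ = (N : ℝ≥0∞) * ∑ i ∈ T, (w i : ℝ≥0∞) := by rw [Finset.mul_sum]
      _ = (N : ℝ≥0∞) * μ.toMeasure (⋃ i ∈ T, A i) := by
            rw [measure_biUnion_finset (fun i _ j _ hij => hAdisj hij) (fun i _ => hAm i)]
            simp_rw [hw]
      _ ≤ (N : ℝ≥0∞) * μ.toMeasure (thickening ε B) :=
            mul_le_mul_right (measure_mono hTsub) _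
    have hrbound : (r : ℝ≥0∞) * Measure.dirac (a i₀) B ≤ (N : ℝ≥0∞) * ENNReal.ofReal ε := by
      calc (r : ℝ≥0∞) * Measure.dirac (a i₀) B ≤ (r : ℝ≥0∞) * 1 := by
            refine mul_le_mul_right ?_ _
            have : Measure.dirac (a i₀) B ≤ Measure.dirac (a i₀) univ := measure_mono (subset_univ _)
            simpa using this
      _ = (r : ℝ≥0∞) := mul_one _
      _ ≤ (N : ℝ≥0∞) * ENNReal.ofReal ε := by
            rw [← ENNReal.ofReal_natCast r, ← ENNReal.ofReal_natCast N,
              ← ENNReal.ofReal_mul (Nat.cast_nonneg N)]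
            exact ENNReal.ofReal_le_ofReal (by nlinarith [hrp, hNp, hδ.le, hε,
              (Nat.cast_nonneg N : (0:ℝ) ≤ N)])
    calc unifM x B
        = (N : ℝ≥0∞)⁻¹ * (∑ i, (k i : ℝ≥0∞) * Measure.dirac (a i) B
            + (r : ℝ≥0∞) * Measure.dirac (a i₀) B) := hxB
      _ ≤ (N : ℝ≥0∞)⁻¹ * ((N : ℝ≥0∞) * μ.toMeasure (thickening ε B)
            + (N : ℝ≥0∞) * ENNReal.ofReal ε) := by
          refine mul_le_mul_right (add_le_add ?_ hrbound) _
          rw [hsum_eq]; exact hTbound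
      _ = μ.toMeasure (thickening ε B) + ENNReal.ofReal ε := by
          rw [← mul_add, ← mul_assoc, ENNReal.inv_mul_cancel hN0 hNtop, one_mul]
  refine ⟨Fintype.card ι, Fintype.card_pos, x ∘ (Fintype.equivFin ι).symm, ?_⟩
  rwa [unifM_comp_equiv (Fintype.equivFin ι).symm x]

section Induced
variable {X : Type*} [MetricSpace X] [MeasurableSpace X] [BorelSpace X]

noncomputable def lpOf (P : ProbabilityMeasure X) : LevyProkhorov (ProbabilityMeasure X) :=
  (LevyProkhorov.toMeasureEquiv (α := ProbabilityMeasure X)).symm P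

noncomputable def unifP {ι : Type*} [Fintype ι] [Nonempty ι] (x : ι → X) :
    ProbabilityMeasure X :=
  ⟨unifM x, isProbabilityMeasure_unifM x⟩

lemma unifP_toMeasure {ι : Type*} [Fintype ι] [Nonempty ι] (x : ι → X) :
    (unifP x).toMeasure = unifM x := rfl

lemma lp_dist (P Q : ProbabilityMeasure X) :
    dist (lpOf P) (lpOf Q) = levyProkhorovDist P.toMeasure Q.toMeasure := rfl

lemma induced_nacomp (f : ℕ → X → X) (hf : ∀ n, Continuous (f n)) (k : ℕ)
    (P : ProbabilityMeasure X) :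
    nacomp (fun l => inducedMap (f l) (hf l)) k (lpOf P)
      = lpOf (P.map (nacomp_continuous f hf k).measurable.aemeasurable) := by
  induction k with
  | zero =>
      show lpOf P = _
      congr 1
      refine ProbabilityMeasure.toMeasure_injective ?_
      rw [ProbabilityMeasure.toMeasure_map]
      exact (Measure.map_id).symm
  | succ k ih =>
      show inducedMap (f k) (hf k) (nacomp (fun l => inducedMap (f l) (hf l)) k (lpOf P)) = _
      rw [ih]
      show lpOf ((P.map (nacomp_continuous f hf k).measurable.aemeasurable).map
        (hf k).measurable.aemeasurable) = _
      congr 1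
      refine ProbabilityMeasure.toMeasure_injective ?_
      simp only [ProbabilityMeasure.toMeasure_map]
      rw [Measure.map_map (hf k).measurable (nacomp_continuous f hf k).measurable]
      rfl

end Induced

/-- Weak mixing of order `n` of the non-autonomous system given by the maps `f k`. -/
def NAWeakMixingOrder {Y : Type*} [TopologicalSpace Y] (f : ℕ → Y → Y) (n : ℕ) : Prop :=
  ∀ U V : Fin n → Set Y, (∀ i, IsOpen (U i)) → (∀ i, IsOpen (V i)) →
    (∀ i, (U i).Nonempty) → (∀ i, (V i).Nonempty) →
    ∃ k, 1 ≤ k ∧ ∀ i, (nacomp f k '' U i ∩ V i).Nonempty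

/-- If `(X, f_{0,∞})` is weakly mixing of all orders, then so is the induced system
`(𝓜(X), f̂_{0,∞})`. -/
theorem induced_weakMixingAllOrders_of_weakMixingAllOrders
    {X : Type*} [MetricSpace X] [CompactSpace X] [MeasurableSpace X] [BorelSpace X]
    (f : ℕ → X → X) (hf : ∀ n, Continuous (f n))
    (h : ∀ n, 2 ≤ n → NAWeakMixingOrder f n) :
    ∀ n, 2 ≤ n → NAWeakMixingOrder (fun k => inducedMap (f k) (hf k)) n := by

  intro n hn U V hUo hVo hUne hVne
  classical
  choose μc hμc using hUne
  choose νc hνc using hVne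
  choose εU hεU hballU using fun i => Metric.isOpen_iff.mp (hUo i) _ (hμc i)
  choose εV hεV hballV using fun i => Metric.isOpen_iff.mp (hVo i) _ (hνc i)
  set δ0 : Fin n → ℝ := fun i => min (εU i) (εV i) / 4 with hδ0def
  have hδ0 : ∀ i, 0 < δ0 i := fun i => by
    have h1 := hεU i; have h2 := hεV i
    have : 0 < min (εU i) (εV i) := lt_min h1 h2
    simp only [hδ0def]; linarith
  have hδ0U : ∀ i, δ0 i + δ0 i < εU i := fun i => by
    have h1 := hεU i; have h2 := hεV i
    have := min_le_left (εU i) (εV i)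
    simp only [hδ0def]; linarith
  have hδ0V : ∀ i, δ0 i + δ0 i < εV i := fun i => by
    have h1 := hεU i; have h2 := hεV i
    have := min_le_right (εU i) (εV i)
    simp only [hδ0def]; linarith
  haveI : Nonempty X :=
    ((LevyProkhorov.toMeasureEquiv (α := ProbabilityMeasure X)) (μc ⟨0, by omega⟩)).nonempty
  have hdU : ∀ i, ∃ m, 0 < m ∧ ∃ x : Fin m → X,
      levyProkhorovDist (unifM x)
        ((LevyProkhorov.toMeasureEquiv (α := ProbabilityMeasure X)) (μc i)).toMeasure ≤ δ0 i := by
    intro i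
    obtain ⟨m, hm, x, hx⟩ :=
      exists_unifM_close ((LevyProkhorov.toMeasureEquiv (α := ProbabilityMeasure X)) (μc i)) (hδ0 i)
    exact ⟨m, hm, x, hx⟩
  have hdV : ∀ i, ∃ m, 0 < m ∧ ∃ x : Fin m → X,
      levyProkhorovDist (unifM x)
        ((LevyProkhorov.toMeasureEquiv (α := ProbabilityMeasure X)) (νc i)).toMeasure ≤ δ0 i := by
    intro i
    obtain ⟨m, hm, x, hx⟩ :=
      exists_unifM_close ((LevyProkhorov.toMeasureEquiv (α := ProbabilityMeasure X)) (νc i)) (hδ0 i)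
    exact ⟨m, hm, x, hx⟩
  choose mU hmU xs hxs using hdU
  choose mV hmV ys hys using hdV
  have hneK : ∀ i, Nonempty (Fin (mU i) × Fin (mV i)) :=
    fun i => ⟨(⟨0, hmU i⟩, ⟨0, hmV i⟩)⟩
  set XA : ∀ i : Fin n, (Fin (mU i) × Fin (mV i)) → X := fun i q => xs i q.1 with hXAdef
  set YA : ∀ i : Fin n, (Fin (mU i) × Fin (mV i)) → X := fun i q => ys i q.2 with hYAdef
  have hcard2 : 2 ≤ Fintype.card (Σ i : Fin n, Fin (mU i) × Fin (mV i)) := by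
    have : ∀ i : Fin n, 1 ≤ Fintype.card (Fin (mU i) × Fin (mV i)) := fun i =>
      @Fintype.card_pos _ _ (hneK i)
    calc (2 : ℕ) ≤ n := hn
    _ = ∑ _i : Fin n, 1 := by simp
    _ ≤ ∑ i : Fin n, Fintype.card (Fin (mU i) × Fin (mV i)) :=
        Finset.sum_le_sum fun i _ => this i
    _ = Fintype.card (Σ i : Fin n, Fin (mU i) × Fin (mV i)) := (Fintype.card_sigma).symm
  set N := Fintype.card (Σ i : Fin n, Fin (mU i) × Fin (mV i)) with hNdef
  set e : Fin N ≃ (Σ i : Fin n, Fin (mU i) × Fin (mV i)) :=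
    (Fintype.equivFin (Σ i : Fin n, Fin (mU i) × Fin (mV i))).symm with hedef
  obtain ⟨k, hk1, hk⟩ := h N hcard2
    (fun j => Metric.ball (XA (e j).1 (e j).2) (δ0 (e j).1))
    (fun j => Metric.ball (YA (e j).1 (e j).2) (δ0 (e j).1))
    (fun _ => isOpen_ball) (fun _ => isOpen_ball)
    (fun j => ⟨_, mem_ball_self (hδ0 _)⟩) (fun j => ⟨_, mem_ball_self (hδ0 _)⟩)
  have hks : ∀ s : (Σ i : Fin n, Fin (mU i) × Fin (mV i)), ∃ zz : X, dist zz (XA s.1 s.2) < δ0 s.1 ∧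
      dist (nacomp f k zz) (YA s.1 s.2) < δ0 s.1 := by
    intro s
    have hthis := hk (e.symm s)
    rw [Equiv.apply_symm_apply] at hthis
    obtain ⟨w, ⟨⟨zz, hzz, rfl⟩, hw⟩⟩ := hthis
    exact ⟨zz, mem_ball.mp hzz, mem_ball.mp hw⟩
  choose z hz1 hz2 using hks
  refine ⟨k, hk1, fun i => ?_⟩
  haveI : Nonempty (Fin (mU i) × Fin (mV i)) := hneK i
  haveI : Nonempty (Fin (mU i)) := ⟨⟨0, hmU i⟩⟩
  haveI : Nonempty (Fin (mV i)) := ⟨⟨0, hmV i⟩⟩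
  set σ : (Fin (mU i) × Fin (mV i)) → X := fun q => z ⟨i, q⟩ with hσdef
  have hPU : lpOf (unifP σ) ∈ U i := by
    apply hballU i
    rw [Metric.mem_ball]
    have d1 : dist (lpOf (unifP σ)) (lpOf (unifP (XA i))) ≤ δ0 i := by
      rw [lp_dist, unifP_toMeasure, unifP_toMeasure]
      exact levyProkhorovDist_unifM_le _ _ (hδ0 i).le (fun q => hz1 ⟨i, q⟩)
    have d2 : dist (lpOf (unifP (XA i))) (μc i) ≤ δ0 i := by
      rw [LevyProkhorov.dist_probabilityMeasure_def]
      show levyProkhorovDist (unifM (XA i)) _ ≤ δ0 i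
      rw [hXAdef]
      rw [unifM_comp_fst (xs i)]
      exact hxs i
    calc dist (lpOf (unifP σ)) (μc i)
        ≤ dist (lpOf (unifP σ)) (lpOf (unifP (XA i))) + dist (lpOf (unifP (XA i))) (μc i) :=
          dist_triangle _ _ _
    _ ≤ δ0 i + δ0 i := add_le_add d1 d2
    _ < εU i := hδ0U i
  have hPV : nacomp (fun l => inducedMap (f l) (hf l)) k (lpOf (unifP σ)) ∈ V i := by
    rw [induced_nacomp f hf k]
    apply hballV i
    rw [Metric.mem_ball]
    have hmap : ((unifP σ).map (nacomp_continuous f hf k).measurable.aemeasurable)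
        = unifP (fun q => nacomp f k (σ q)) := by
      refine ProbabilityMeasure.toMeasure_injective ?_
      rw [ProbabilityMeasure.toMeasure_map, unifP_toMeasure, unifP_toMeasure,
        unifM_map _ (nacomp_continuous f hf k).measurable]
      rfl
    rw [hmap]
    have d1 : dist (lpOf (unifP (fun q => nacomp f k (σ q)))) (lpOf (unifP (YA i))) ≤ δ0 i := by
      rw [lp_dist, unifP_toMeasure, unifP_toMeasure]
      exact levyProkhorovDist_unifM_le _ _ (hδ0 i).le (fun q => hz2 ⟨i, q⟩)
    have d2 : dist (lpOf (unifP (YA i))) (νc i) ≤ δ0 i := by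
      rw [LevyProkhorov.dist_probabilityMeasure_def]
      show levyProkhorovDist (unifM (YA i)) _ ≤ δ0 i
      rw [hYAdef]
      rw [unifM_comp_snd (ys i)]
      exact hys i
    calc dist (lpOf (unifP (fun q => nacomp f k (σ q)))) (νc i)
        ≤ dist (lpOf (unifP (fun q => nacomp f k (σ q)))) (lpOf (unifP (YA i)))
            + dist (lpOf (unifP (YA i))) (νc i) := dist_triangle _ _ _
    _ ≤ δ0 i + δ0 i := add_le_add d1 d2
    _ < εV i := hδ0V i
  exact ⟨_, ⟨lpOf (unifP σ), hPU, rfl⟩, hPV⟩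
end

section
/- Let (X,d) be a compact metric space and f_{0,∞} = {f_n}_{n=0}^∞ a sequence of continuous self-maps of X. Then (X, f_{0,∞}) is topologically exact if and only if the induced system (𝓜(X), f̂_{0,∞}) is topologically exact. -/
open MeasureTheory Filter

/-- Topological exactness of the non-autonomous system given by the maps `f n`. -/
def NAExact {Y : Type*} [TopologicalSpace Y] (f : ℕ → Y → Y) : Prop :=
  ∃ N, 1 ≤ N ∧ ∀ U : Set Y, IsOpen U → U.Nonempty → ∀ n, N ≤ n → nacomp f n '' U = Set.univ

section Auxiliary

open Metric Set ENNReal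
open scoped Classical Topology NNReal

section Pick

variable {X : Type*} [MetricSpace X]

/-- Greedy choice of the first center `c` in the list `l` such that `x` has a `g`-preimage in
`C ∩ closedBall c ρ`. -/
noncomputable def pickC [Nonempty X] (g : X → X) (ρ : ℝ) (C : Set X) (x : X) : List X → X
  | [] => Classical.arbitrary X
  | c :: l => if x ∈ g '' (C ∩ closedBall c ρ) then c else pickC g ρ C x l

lemma pickC_spec [Nonempty X] (g : X → X) (ρ : ℝ) (C : Set X) (x : X) :
    ∀ l : List X, (∃ c ∈ l, x ∈ g '' (C ∩ closedBall c ρ)) →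
      x ∈ g '' (C ∩ closedBall (pickC g ρ C x l) ρ)
  | [], h => by simp at h
  | c :: l, h => by
    by_cases hc : x ∈ g '' (C ∩ closedBall c ρ)
    · simpa [pickC, hc] using hc
    · obtain ⟨c', hc', hx⟩ := h
      rcases List.mem_cons.mp hc' with rfl | hmem
      · exact absurd hx hc
      · simpa [pickC, hc] using pickC_spec g ρ C x l ⟨c', hmem, hx⟩

lemma pickC_mem [Nonempty X] (g : X → X) (ρ : ℝ) (C : Set X) (x : X) :
    ∀ l : List X, pickC g ρ C x l ∈ (Classical.arbitrary X) :: l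
  | [] => by simp [pickC]
  | c :: l => by
    by_cases hc : x ∈ g '' (C ∩ closedBall c ρ)
    · simp [pickC, hc]
    · have := pickC_mem g ρ C x l
      simp only [pickC, if_neg hc]
      rcases List.mem_cons.mp this with h | h
      · simp [h]
      · simp [List.mem_cons, h]

lemma pickC_fiber [Nonempty X] [MeasurableSpace X] [BorelSpace X] {g : X → X} (hg : Continuous g)
    (ρ : ℝ) {C : Set X} (hC : IsCompact C) (v : X) :
    ∀ l : List X, MeasurableSet {x | pickC g ρ C x l = v}
  | [] => by
      simp only [pickC]
      exact MeasurableSet.const _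
  | c :: l => by
      have hS : IsClosed (g '' (C ∩ closedBall c ρ)) :=
        ((hC.inter_right isClosed_closedBall).image hg).isClosed
      have hset : {x | pickC g ρ C x (c :: l) = v}
          = (g '' (C ∩ closedBall c ρ) ∩ {x | c = v}) ∪
            ((g '' (C ∩ closedBall c ρ))ᶜ ∩ {x | pickC g ρ C x l = v}) := by
        ext x
        by_cases hx : x ∈ g '' (C ∩ closedBall c ρ)
        · simp only [mem_setOf_eq, pickC, if_pos hx, mem_union, mem_inter_iff, mem_compl_iff,
            mem_setOf_eq]
          tauto
        · simp only [mem_setOf_eq, pickC, if_neg hx, mem_union, mem_inter_iff, mem_compl_iff,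
            mem_setOf_eq]
          tauto
      rw [hset]
      exact ((hS.measurableSet.inter (MeasurableSet.const _))).union
        (hS.measurableSet.compl.inter (pickC_fiber hg ρ hC v l))

end Pick

section FinFib

variable {X : Type*} [MeasurableSpace X]

/-- A function with finitely many values, all of whose fibers are measurable. -/
def FinFib {α : Type*} (F : X → α) : Prop :=
  (Set.range F).Finite ∧ ∀ a, MeasurableSet {x | F x = a}

lemma FinFib.comp {α β : Type*} {F : X → α} (h : FinFib F) (φ : α → β) :
    FinFib fun x => φ (F x) := by
  refine ⟨(h.1.image φ).subset ?_, fun b => ?_⟩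
  · rintro _ ⟨x, rfl⟩; exact ⟨F x, ⟨x, rfl⟩, rfl⟩
  · have hset : {x | φ (F x) = b} = ⋃ a ∈ {a | a ∈ range F ∧ φ a = b}, {x | F x = a} := by
      ext x
      simp only [mem_setOf_eq, mem_iUnion, exists_prop]
      constructor
      · intro hx
        exact ⟨F x, ⟨⟨x, rfl⟩, hx⟩, rfl⟩
      · rintro ⟨a, ⟨-, ha⟩, rfl⟩
        exact ha
    rw [hset]
    exact Set.Finite.measurableSet_biUnion (h.1.subset (fun a ha => ha.1)) (fun a _ => h.2 a)

lemma FinFib.measurable {α : Type*} [MeasurableSpace α] {F : X → α} (h : FinFib F) :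
    Measurable F := by
  intro A _
  have hset : F ⁻¹' A = ⋃ a ∈ {a | a ∈ range F ∧ a ∈ A}, {x | F x = a} := by
    ext x
    simp only [mem_preimage, mem_iUnion, exists_prop, mem_setOf_eq]
    constructor
    · intro hx
      exact ⟨F x, ⟨⟨x, rfl⟩, hx⟩, rfl⟩
    · rintro ⟨a, ⟨-, ha⟩, rfl⟩
      exact ha
  rw [hset]
  exact Set.Finite.measurableSet_biUnion (h.1.subset (fun a ha => ha.1)) (fun a _ => h.2 a)

end FinFib
section Section

variable {X : Type*} [MetricSpace X] [CompactSpace X] [MeasurableSpace X] [BorelSpace X]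

/-- A continuous map whose restriction to a compact set `K` is surjective admits a Borel
measurable section with values in `K`. -/
theorem exists_measurable_section [Nonempty X]
    {K : Set X} (hK : IsCompact K) {g : X → X} (hg : Continuous g)
    (hsurj : ∀ x, ∃ k ∈ K, g k = x) :
    ∃ s : X → X, Measurable s ∧ ∀ x, s x ∈ K ∧ g (s x) = x := by
  have net : ∀ m : ℕ, ∃ l : List X, ∀ y : X, ∃ c ∈ l, y ∈ closedBall c ((1/2 : ℝ) ^ m) := by
    intro m
    obtain ⟨t, -, htfin, hcov⟩ :=
      isCompact_univ.finite_cover_balls (s := (univ : Set X)) (e := (1/2 : ℝ)^m) (by positivity)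
    refine ⟨htfin.toFinset.toList, fun y => ?_⟩
    obtain ⟨c, hc, hyc⟩ := mem_iUnion₂.mp (hcov (mem_univ y))
    exact ⟨c, by simp [hc], ball_subset_closedBall hyc⟩
  choose L hL using net
  set r : ℕ → ℝ := fun m => (1/2 : ℝ)^m with hr
  set Q : ℕ → X → Set X := fun m => Nat.rec (fun _ => K)
    (fun m Qm x => Qm x ∩ closedBall (pickC g (r (m+1)) (Qm x) x (L (m+1))) (r (m+1))) m
    with hQdef
  have hQsucc : ∀ m x, Q (m+1) x
      = Q m x ∩ closedBall (pickC g (r (m+1)) (Q m x) x (L (m+1))) (r (m+1)) := fun m x => rfl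
  -- main invariant
  have inv : ∀ m, ∀ x, IsCompact (Q m x) ∧ Q m x ⊆ K ∧ x ∈ g '' (Q m x) := by
    intro m
    induction m with
    | zero => exact fun x => ⟨hK, subset_rfl, hsurj x⟩
    | succ m ih =>
      intro x
      obtain ⟨hcomp, hsub, hmem⟩ := ih x
      have hpick : x ∈ g '' (Q m x ∩
          closedBall (pickC g (r (m+1)) (Q m x) x (L (m+1))) (r (m+1))) := by
        apply pickC_spec
        obtain ⟨k, hk, hgk⟩ := hmem
        obtain ⟨c, hc, hkc⟩ := hL (m+1) k
        exact ⟨c, hc, ⟨k, ⟨hk, hkc⟩, hgk⟩⟩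
      refine ⟨?_, ?_, ?_⟩
      · rw [hQsucc]; exact hcomp.inter_right isClosed_closedBall
      · rw [hQsucc]; exact inter_subset_left.trans hsub
      · rw [hQsucc]; exact hpick
  -- fiberwise measurability
  have ffib : ∀ m, FinFib (Q m) := by
    intro m
    induction m with
    | zero =>
      refine ⟨(finite_singleton K).subset ?_, fun C => ?_⟩
      · rintro _ ⟨x, rfl⟩; exact rfl
      · show MeasurableSet {_x : X | K = C}
        exact MeasurableSet.const _
    | succ m ih =>
      have hpair : FinFib (fun x => (Q m x, pickC g (r (m+1)) (Q m x) x (L (m+1)))) := by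
        constructor
        · apply (ih.1.prod (((L (m+1)).finite_toSet).insert (Classical.arbitrary X))).subset
          rintro _ ⟨x, rfl⟩
          refine ⟨⟨x, rfl⟩, ?_⟩
          have := pickC_mem g (r (m+1)) (Q m x) x (L (m+1))
          simpa [Set.insert] using List.mem_cons.mp this
        · rintro ⟨C, c⟩
          by_cases hC : C ∈ range (Q m)
          · have hset : {x | (Q m x, pickC g (r (m+1)) (Q m x) x (L (m+1))) = (C, c)}
                = {x | Q m x = C} ∩ {x | pickC g (r (m+1)) C x (L (m+1)) = c} := by
              ext x
              simp only [mem_setOf_eq, Prod.mk.injEq, mem_inter_iff]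
              constructor
              · rintro ⟨h1, h2⟩; exact ⟨h1, h1 ▸ h2⟩
              · rintro ⟨h1, h2⟩; exact ⟨h1, h1 ▸ h2⟩
            obtain ⟨x₀, hx₀⟩ := hC
            have hCc : IsCompact C := hx₀ ▸ (inv m x₀).1
            rw [hset]
            exact (ih.2 C).inter (pickC_fiber hg _ hCc c _)
          · have hset : {x | (Q m x, pickC g (r (m+1)) (Q m x) x (L (m+1))) = (C, c)} = ∅ := by
              ext x
              simp only [mem_setOf_eq, Prod.mk.injEq, mem_empty_iff_false, iff_false, not_and]
              intro h1
              exact absurd ⟨x, h1⟩ hC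
            rw [hset]; exact MeasurableSet.empty
      exact hpair.comp (fun p : Set X × X => p.1 ∩ closedBall p.2 (r (m+1)))
  -- approximate sections
  set pt : Set X → X := fun C => if h : C.Nonempty then h.some else Classical.arbitrary X with hpt
  set s : ℕ → X → X := fun m x => pt (Q (m+1) x) with hs
  have hsmeas : ∀ m, Measurable (s m) := fun m => ((ffib (m+1)).comp pt).measurable
  have hQne : ∀ m x, (Q m x).Nonempty := by
    intro m x
    obtain ⟨k, hk, -⟩ := (inv m x).2.2
    exact ⟨k, hk⟩
  have hsmem : ∀ m x, s m x ∈ Q (m+1) x := by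
    intro m x
    have hne := hQne (m+1) x
    simp only [hs, hpt, dif_pos hne]
    exact hne.some_mem
  have hmono : ∀ m x, Q (m+1) x ⊆ Q m x := fun m x => by rw [hQsucc]; exact inter_subset_left
  have hdist : ∀ m x, ∀ p ∈ Q (m+1) x, ∀ q ∈ Q (m+1) x, dist p q ≤ 2 * r (m+1) := by
    intro m x p hp q hq
    rw [hQsucc] at hp hq
    calc dist p q ≤ dist p (pickC g (r (m+1)) (Q m x) x (L (m+1)))
          + dist (pickC g (r (m+1)) (Q m x) x (L (m+1))) q := dist_triangle _ _ _
    _ ≤ r (m+1) + r (m+1) := add_le_add hp.2 (by rw [dist_comm]; exact hq.2)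
    _ = 2 * r (m+1) := by ring
  have hr2 : ∀ m, 2 * r (m+1) = r m := by
    intro m
    simp only [hr, pow_succ]
    ring
  have hcauchy : ∀ x, CauchySeq (fun m => s m x) := by
    intro x
    apply cauchySeq_of_le_geometric (1/2 : ℝ) 1 (by norm_num)
    intro m
    have h1 : s m x ∈ Q (m+1) x := hsmem m x
    have h2 : s (m+1) x ∈ Q (m+1) x := hmono (m+1) x (hsmem (m+1) x)
    calc dist (s m x) (s (m+1) x) ≤ 2 * r (m+1) := hdist m x _ h1 _ h2
    _ = 1 * (1/2 : ℝ)^m := by rw [hr2]; simp [hr]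
  choose σ hσ using fun x => cauchySeq_tendsto_of_complete (hcauchy x)
  refine ⟨σ, ?_, ?_⟩
  · exact measurable_of_tendsto_metrizable' atTop hsmeas (tendsto_pi_nhds.mpr hσ)
  · intro x
    have hx := hσ x
    constructor
    · exact hK.isClosed.mem_of_tendsto hx
        (Eventually.of_forall fun m => (inv (m+1) x).2.1 (hsmem m x))
    · choose k hk hgk using fun m => (inv (m+1) x).2.2
      have hdk : ∀ m, dist (k m) (s m x) ≤ r m := by
        intro m
        rw [← hr2 m]
        exact hdist m x _ (hk m) _ (hsmem m x)
      have hklim : Tendsto k atTop (𝓝 (σ x)) := by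
        rw [tendsto_iff_dist_tendsto_zero]
        have hb : ∀ m, dist (k m) (σ x) ≤ r m + dist (s m x) (σ x) := by
          intro m
          calc dist (k m) (σ x) ≤ dist (k m) (s m x) + dist (s m x) (σ x) := dist_triangle _ _ _
          _ ≤ r m + dist (s m x) (σ x) := add_le_add_left (hdk m) _
        have h1 : Tendsto (fun m => r m) atTop (𝓝 0) :=
          tendsto_pow_atTop_nhds_zero_of_lt_one (by norm_num) (by norm_num)
        have h2 : Tendsto (fun m => dist (s m x) (σ x)) atTop (𝓝 0) :=
          tendsto_iff_dist_tendsto_zero.mp hx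
        have h3 : Tendsto (fun m => r m + dist (s m x) (σ x)) atTop (𝓝 0) := by
          simpa using h1.add h2
        exact squeeze_zero (fun m => dist_nonneg) hb h3
      have hgconst : (fun m => g (k m)) = fun _ => x := funext hgk
      have hglim : Tendsto (fun m => g (k m)) atTop (𝓝 (g (σ x))) := (hg.tendsto _).comp hklim
      have : Tendsto (fun m => g (k m)) atTop (𝓝 x) := by
        rw [hgconst]; exact tendsto_const_nhds
      exact tendsto_nhds_unique hglim this

end Section
section Lemmas

variable {X : Type*} [MetricSpace X] [CompactSpace X] [MeasurableSpace X] [BorelSpace X]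

lemma nacomp_continuous_s8 (f : ℕ → X → X) (hf : ∀ n, Continuous (f n)) (n : ℕ) :
    Continuous (nacomp f n) := by
  induction n with
  | zero => exact continuous_id
  | succ n ih => exact (hf n).comp ih

lemma nacomp_induced (f : ℕ → X → X) (hf : ∀ n, Continuous (f n)) (n : ℕ)
    (μ : LevyProkhorov (ProbabilityMeasure X)) :
    ((LevyProkhorov.toMeasureEquiv (α := ProbabilityMeasure X)
        (nacomp (fun n => inducedMap (f n) (hf n)) n μ)) : ProbabilityMeasure X).toMeasure
      = ((LevyProkhorov.toMeasureEquiv (α := ProbabilityMeasure X) μ) :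
          ProbabilityMeasure X).toMeasure.map (nacomp f n) := by
  induction n with
  | zero =>
    show ((LevyProkhorov.toMeasureEquiv (α := ProbabilityMeasure X) μ) : ProbabilityMeasure X).toMeasure = _
    rw [show nacomp f 0 = id from rfl, Measure.map_id]
  | succ n ih =>
    show ((((LevyProkhorov.toMeasureEquiv (α := ProbabilityMeasure X))
        (nacomp (fun n => inducedMap (f n) (hf n)) n μ)).map
        (hf n).measurable.aemeasurable) : ProbabilityMeasure X).toMeasure = _
    rw [ProbabilityMeasure.toMeasure_map, ih,
      Measure.map_map (hf n).measurable (nacomp_continuous_s8 f hf n).measurable]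
    rfl

/-- Finitely supported approximation in the Lévy-Prokhorov distance. -/
lemma finite_approx [Nonempty X] (μ0 : Measure X) [IsProbabilityMeasure μ0] {δ : ℝ}
    (hδ : 0 < δ) :
    ∃ (rr : ℕ) (z : ℕ → X) (a : ℕ → ℝ≥0∞),
      (∑ n ∈ Finset.range rr, a n = 1) ∧
      levyProkhorovEDist μ0 (∑ n ∈ Finset.range rr, a n • Measure.dirac (z n))
        ≤ ENNReal.ofReal δ := by
  obtain ⟨t, -, htfin, hcov⟩ :=
    isCompact_univ.finite_cover_balls (s := (univ : Set X)) (e := δ) hδ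
  set l := htfin.toFinset.toList with hldef
  have hlmem : ∀ y : X, ∃ c ∈ l, y ∈ ball c δ := by
    intro y
    obtain ⟨c, hc, hyc⟩ := mem_iUnion₂.mp (hcov (mem_univ y))
    exact ⟨c, by simp [hldef, hc], hyc⟩
  set rr := l.length with hrr
  set z : ℕ → X := fun n => l.getD n (Classical.arbitrary X) with hz
  have hcover : ∀ y : X, ∃ n < rr, y ∈ ball (z n) δ := by
    intro y
    obtain ⟨c, hc, hyc⟩ := hlmem y
    obtain ⟨i, hi, hEq⟩ := List.mem_iff_getElem.mp hc
    refine ⟨i, hi, ?_⟩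
    show y ∈ ball (l.getD i (Classical.arbitrary X)) δ
    rw [List.getD_eq_getElem l _ hi, hEq]
    exact hyc
  have hrrpos : 1 ≤ rr := by
    obtain ⟨n, hn, -⟩ := hcover (Classical.arbitrary X)
    omega
  set E : ℕ → Set X := disjointed (fun n => ball (z n) δ) with hE
  have hEsub : ∀ n, E n ⊆ ball (z n) δ := disjointed_subset _
  have hEdisj : Pairwise (Function.onFun Disjoint E) := disjoint_disjointed _
  have hEmeas : ∀ n, MeasurableSet (E n) :=
    MeasurableSet.disjointed fun n => isOpen_ball.measurableSet
  have hEunion : ⋃ n, E n = univ := by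
    rw [hE, iUnion_disjointed]
    apply eq_univ_of_forall
    intro y
    obtain ⟨n, -, hy⟩ := hcover y
    exact mem_iUnion.mpr ⟨n, hy⟩
  have hEtail : ∀ n, rr ≤ n → E n = ∅ := by
    intro n hn
    obtain ⟨m, rfl⟩ : ∃ m, n = m + 1 := ⟨n - 1, by omega⟩
    rw [hE, show m + 1 = Order.succ m from rfl, disjointed_succ _ (not_isMax m)]
    have : (univ : Set X) ⊆ (partialSups (fun n => ball (z n) δ)) m := by
      intro y _
      obtain ⟨i, hi, hy⟩ := hcover y
      rw [partialSups_eq_biSup]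
      exact mem_iUnion₂.mpr ⟨i, by omega, hy⟩
    have h2 : (partialSups (fun n => ball (z n) δ)) m = univ := eq_univ_of_univ_subset this
    rw [h2]
    simp
  set a : ℕ → ℝ≥0∞ := fun n => μ0 (E n) with ha
  have hsum : ∑ n ∈ Finset.range rr, a n = 1 := by
    have hd : (↑(Finset.range rr) : Set ℕ).PairwiseDisjoint E :=
      fun i _ j _ hij => hEdisj hij
    rw [ha]
    rw [← measure_biUnion_finset hd (fun n _ => hEmeas n)]
    have : ⋃ n ∈ Finset.range rr, E n = univ := by
      rw [← hEunion]
      apply Subset.antisymm (iUnion₂_subset fun n _ => subset_iUnion E n)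
      intro y hy
      obtain ⟨n, hn⟩ := mem_iUnion.mp hy
      rcases lt_or_ge n rr with h | h
      · exact mem_iUnion₂.mpr ⟨n, Finset.mem_range.mpr h, hn⟩
      · rw [hEtail n h] at hn; exact absurd hn (notMem_empty y)
    rw [this, measure_univ]
  set ν : Measure X := ∑ n ∈ Finset.range rr, a n • Measure.dirac (z n) with hν
  have hνprob : IsProbabilityMeasure ν := by
    constructor
    rw [hν, Measure.finset_sum_apply]
    simp only [Measure.smul_apply, measure_univ, smul_eq_mul, mul_one]
    exact hsum
  refine ⟨rr, z, a, hsum, ?_⟩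
  apply levyProkhorovEDist_le_of_forall_le
  intro ε B hε hεtop hB
  have hδε : δ < ε.toReal := (ENNReal.ofReal_lt_iff_lt_toReal hδ.le hεtop.ne).mp hε
  have hsplit : μ0 B = ∑' n, μ0 (B ∩ E n) := by
    conv_lhs => rw [show B = ⋃ n, B ∩ E n by rw [← inter_iUnion, hEunion, inter_univ]]
    exact measure_iUnion
      (fun i j hij => ((hEdisj hij).mono inter_subset_right inter_subset_right))
      (fun n => hB.inter (hEmeas n))
  have htsum : ∑' n, μ0 (B ∩ E n) = ∑ n ∈ Finset.range rr, μ0 (B ∩ E n) := by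
    apply tsum_eq_sum
    intro n hn
    rw [hEtail n (by simpa using hn)]
    simp
  have hterm : ∀ n ∈ Finset.range rr,
      μ0 (B ∩ E n) ≤ a n * Measure.dirac (z n) (thickening ε.toReal B) := by
    intro n _
    by_cases hzn : z n ∈ thickening ε.toReal B
    · rw [Measure.dirac_apply_of_mem hzn, mul_one]
      exact measure_mono inter_subset_right
    · have hempty : B ∩ E n = ∅ := by
        rw [eq_empty_iff_forall_notMem]
        intro p hp
        apply hzn
        rw [mem_thickening_iff]
        refine ⟨p, hp.1, ?_⟩
        have := hEsub n hp.2
        rw [mem_ball] at this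
        rw [dist_comm]
        exact this.trans hδε
      rw [hempty]
      simp
  calc μ0 B = ∑ n ∈ Finset.range rr, μ0 (B ∩ E n) := by rw [hsplit, htsum]
  _ ≤ ∑ n ∈ Finset.range rr, a n * Measure.dirac (z n) (thickening ε.toReal B) :=
      Finset.sum_le_sum hterm
  _ = ν (thickening ε.toReal B) := by
      rw [hν, Measure.finset_sum_apply]
      simp only [Measure.smul_apply, smul_eq_mul]
  _ ≤ ν (thickening ε.toReal B) + ε := le_self_add

/-- The set of measures giving positive mass to a fixed open set is open in the
Lévy-Prokhorov metric. -/
lemma isOpen_pos_meas {U : Set X} (hU : IsOpen U) :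
    IsOpen {ρ : LevyProkhorov (ProbabilityMeasure X) |
      0 < ((LevyProkhorov.toMeasureEquiv (α := ProbabilityMeasure X) ρ) : ProbabilityMeasure X).toMeasure U} := by
  rw [Metric.isOpen_iff]
  intro ρ hρ
  set m := ((LevyProkhorov.toMeasureEquiv (α := ProbabilityMeasure X) ρ) : ProbabilityMeasure X).toMeasure with hm
  have hpos : 0 < m U := hρ
  obtain ⟨F, hFU, hFclosed, hFm⟩ := hU.measurableSet.exists_isClosed_lt_add
    (μ := m) (measure_ne_top m U) (ε := m U / 2) (by simp [hpos.ne'])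
  have hF : m U / 2 < m F := by
    have h2 : m U / 2 + m U / 2 < m F + m U / 2 := by
      rw [ENNReal.add_halves]
      exact hFm.trans_le (by rw [add_comm])
    exact lt_of_add_lt_add_right h2
  have hFpos : 0 < m F := lt_of_le_of_lt zero_le hF
  obtain ⟨δ, hδpos, hthick⟩ :=
    (hFclosed.isCompact).exists_thickening_subset_open hU hFU
  set c := min δ ((m F).toReal / 2) with hc
  have hFfin : m F ≠ ⊤ := measure_ne_top m F
  have htR : 0 < (m F).toReal := ENNReal.toReal_pos hFpos.ne' hFfin
  have hcpos : 0 < c := lt_min hδpos (by positivity)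
  have hcltF : ENNReal.ofReal c < m F := by
    rw [ENNReal.ofReal_lt_iff_lt_toReal hcpos.le hFfin]
    exact lt_of_le_of_lt (min_le_right _ _) (by linarith)
  refine ⟨c, hcpos, fun τ hτ => ?_⟩
  set mτ := ((LevyProkhorov.toMeasureEquiv (α := ProbabilityMeasure X) τ) : ProbabilityMeasure X).toMeasure
    with hmτ
  have hdist : dist τ ρ < c := mem_ball.mp hτ
  have hedist : levyProkhorovEDist m mτ < ENNReal.ofReal c := by
    rw [levyProkhorovEDist_comm]
    have h1 : dist τ ρ = (levyProkhorovEDist mτ m).toReal := rfl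
    rw [ENNReal.lt_ofReal_iff_toReal_lt (levyProkhorovEDist_ne_top _ _)]
    rw [← h1]
    exact hdist
  have hkey := left_measure_le_of_levyProkhorovEDist_lt hedist (B := F) hFclosed.measurableSet
  have hsub : thickening (ENNReal.ofReal c).toReal F ⊆ U := by
    rw [ENNReal.toReal_ofReal hcpos.le]
    exact (thickening_mono (min_le_left _ _) F).trans hthick
  have hkey2 : m F ≤ mτ U + ENNReal.ofReal c :=
    hkey.trans (add_le_add_left (measure_mono hsub) _)
  show 0 < mτ U
  by_contra h
  push_neg at h
  rw [le_zero_iff] at h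
  rw [h, zero_add] at hkey2
  exact absurd hkey2 (not_le.mpr hcltF)

end Lemmas

end Auxiliary

section MainProof

open Metric Set ENNReal
open scoped Classical Topology NNReal

/-- `(X, f_{0,∞})` is topologically exact iff the induced system `(𝓜(X), f̂_{0,∞})` is
topologically exact. -/
theorem exact_iff_induced_exact
    {X : Type*} [MetricSpace X] [CompactSpace X] [MeasurableSpace X] [BorelSpace X]
    (f : ℕ → X → X) (hf : ∀ n, Continuous (f n)) :
    NAExact f ↔ NAExact (fun n => inducedMap (f n) (hf n)) := by
  by_cases hXne : Nonempty X
  case neg =>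
    -- If `X` is empty both systems are trivially exact.
    have hX : ∀ U : Set X, ¬ U.Nonempty := fun U ⟨x, _⟩ => hXne ⟨x⟩
    have hM : ∀ U : Set (LevyProkhorov (ProbabilityMeasure X)), ¬ U.Nonempty := by
      rintro U ⟨μ, -⟩
      set P : ProbabilityMeasure X := LevyProkhorov.toMeasureEquiv (α := ProbabilityMeasure X) μ
      haveI : IsProbabilityMeasure P.toMeasure := P.2
      have h1 : P.toMeasure univ = 1 := measure_univ
      rw [univ_eq_empty_iff.mpr (not_nonempty_iff.mp hXne)] at h1
      simp at h1
    constructor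
    · intro _
      exact ⟨1, le_rfl, fun U _ hUne _ _ => absurd hUne (hM U)⟩
    · intro _
      exact ⟨1, le_rfl, fun U _ hUne _ _ => absurd hUne (hX U)⟩
  haveI : Nonempty X := hXne
  constructor
  · -- forward direction
    rintro ⟨N, hN1, hexact⟩
    refine ⟨N, hN1, ?_⟩
    intro U hU hUne n hn
    rw [Set.eq_univ_iff_forall]
    intro lamLP
    set lam := (LevyProkhorov.toMeasureEquiv (α := ProbabilityMeasure X) lamLP).toMeasure with hlam
    haveI : IsProbabilityMeasure lam := (LevyProkhorov.toMeasureEquiv (α := ProbabilityMeasure X) lamLP).2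
    obtain ⟨μ0LP, hμ0U⟩ := hUne
    obtain ⟨ε, hεpos, hball⟩ := Metric.isOpen_iff.mp hU μ0LP hμ0U
    set μ0 := (LevyProkhorov.toMeasureEquiv (α := ProbabilityMeasure X) μ0LP).toMeasure with hμ0
    haveI : IsProbabilityMeasure μ0 := (LevyProkhorov.toMeasureEquiv (α := ProbabilityMeasure X) μ0LP).2
    have hδpos : 0 < ε / 8 := by linarith
    obtain ⟨rr, z, a, hsum, happrox⟩ := finite_approx μ0 hδpos
    set ν : Measure X := ∑ j ∈ Finset.range rr, a j • Measure.dirac (z j) with hν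
    have hνprob : IsProbabilityMeasure ν := by
      constructor
      rw [hν, Measure.finset_sum_apply]
      simp only [Measure.smul_apply, measure_univ, smul_eq_mul, mul_one]
      exact hsum
    set g : X → X := nacomp f n with hg
    have hgcont : Continuous g := nacomp_continuous_s8 f hf n
    -- measurable sections over each ball
    have hsec : ∀ j : ℕ, ∃ s : X → X, Measurable s ∧
        ∀ x, s x ∈ closedBall (z j) (ε / 8) ∧ g (s x) = x := by
      intro j
      apply exists_measurable_section (isClosed_closedBall.isCompact) hgcont
      intro x
      have himg : g '' (ball (z j) (ε / 8)) = univ :=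
        hexact (ball (z j) (ε / 8)) isOpen_ball ⟨z j, mem_ball_self hδpos⟩ n hn
      have hx : x ∈ g '' ball (z j) (ε / 8) := himg ▸ mem_univ x
      obtain ⟨k, hk, hgk⟩ := hx
      exact ⟨k, ball_subset_closedBall hk, hgk⟩
    choose s hsmeas hsprop using hsec
    set μ' : Measure X := ∑ j ∈ Finset.range rr, a j • lam.map (s j) with hμ'
    have happly : ∀ B : Set X, MeasurableSet B →
        μ' B = ∑ j ∈ Finset.range rr, a j * lam (s j ⁻¹' B) := by
      intro B hB
      rw [hμ', Measure.finset_sum_apply]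
      apply Finset.sum_congr rfl
      intro j _
      rw [Measure.smul_apply, Measure.map_apply (hsmeas j) hB, smul_eq_mul]
    have hμ'prob : IsProbabilityMeasure μ' := by
      constructor
      rw [happly univ MeasurableSet.univ]
      simp only [preimage_univ, measure_univ, mul_one]
      exact hsum
    have hmap : μ'.map g = lam := by
      ext B hB
      rw [Measure.map_apply hgcont.measurable hB, happly _ (hgcont.measurable hB)]
      have hcongr : ∀ j ∈ Finset.range rr, a j * lam (s j ⁻¹' (g ⁻¹' B)) = a j * lam B := by
        intro j _
        have hpre : s j ⁻¹' (g ⁻¹' B) = B := by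
          ext x
          simp only [mem_preimage, (hsprop j x).2]
        rw [hpre]
      rw [Finset.sum_congr rfl hcongr, ← Finset.sum_mul, hsum, one_mul]
    have hdistν : levyProkhorovEDist μ' ν ≤ ENNReal.ofReal (ε / 8) := by
      apply levyProkhorovEDist_le_of_forall_le
      intro ε' B hε' hε'top hB
      have hδε : ε / 8 < ε'.toReal :=
        (ENNReal.ofReal_lt_iff_lt_toReal hδpos.le hε'top.ne).mp hε'
      rw [happly B hB]
      have hterm : ∀ j ∈ Finset.range rr,
          a j * lam (s j ⁻¹' B) ≤ a j * Measure.dirac (z j) (thickening ε'.toReal B) := by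
        intro j _
        by_cases hzj : z j ∈ thickening ε'.toReal B
        · rw [Measure.dirac_apply_of_mem hzj, mul_one]
          simpa using mul_le_mul_right (prob_le_one (μ := lam) (s := s j ⁻¹' B)) (a j)
        · have hempty : s j ⁻¹' B = ∅ := by
            rw [eq_empty_iff_forall_notMem]
            intro x hx
            apply hzj
            rw [mem_thickening_iff]
            refine ⟨s j x, hx, ?_⟩
            have hmem := (hsprop j x).1
            rw [mem_closedBall] at hmem
            rw [dist_comm]
            exact lt_of_le_of_lt hmem hδε
          rw [hempty]
          simp
      calc ∑ j ∈ Finset.range rr, a j * lam (s j ⁻¹' B)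
          ≤ ∑ j ∈ Finset.range rr, a j * Measure.dirac (z j) (thickening ε'.toReal B) :=
            Finset.sum_le_sum hterm
      _ = ν (thickening ε'.toReal B) := by
          rw [hν, Measure.finset_sum_apply]
          simp only [Measure.smul_apply, smul_eq_mul]
      _ ≤ ν (thickening ε'.toReal B) + ε' := le_self_add
    -- package the measure and check membership
    set μ'P : ProbabilityMeasure X := ⟨μ', hμ'prob⟩ with hμ'P
    set μ'LP : LevyProkhorov (ProbabilityMeasure X) :=
      (LevyProkhorov.toMeasureEquiv (α := ProbabilityMeasure X)).symm μ'P with hμ'LP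
    set νP : ProbabilityMeasure X := ⟨ν, hνprob⟩ with hνP
    set νLP : LevyProkhorov (ProbabilityMeasure X) :=
      (LevyProkhorov.toMeasureEquiv (α := ProbabilityMeasure X)).symm νP with hνLP
    have hd1 : dist μ'LP νLP ≤ ε / 8 := by
      rw [LevyProkhorov.dist_probabilityMeasure_def]
      exact ENNReal.toReal_le_of_le_ofReal hδpos.le hdistν
    have hd2 : dist νLP μ0LP ≤ ε / 8 := by
      rw [LevyProkhorov.dist_probabilityMeasure_def]
      apply ENNReal.toReal_le_of_le_ofReal hδpos.le
      rw [levyProkhorovEDist_comm]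
      exact happrox
    have hmem : μ'LP ∈ U := by
      apply hball
      rw [mem_ball]
      calc dist μ'LP μ0LP ≤ dist μ'LP νLP + dist νLP μ0LP := dist_triangle _ _ _
      _ ≤ ε / 8 + ε / 8 := add_le_add hd1 hd2
      _ < ε := by linarith
    refine ⟨μ'LP, hmem, ?_⟩
    apply (LevyProkhorov.toMeasureEquiv (α := ProbabilityMeasure X)).injective
    apply ProbabilityMeasure.toMeasure_injective
    rw [nacomp_induced f hf n μ'LP]
    show ((LevyProkhorov.toMeasureEquiv (α := ProbabilityMeasure X) μ'LP).toMeasure).map (nacomp f n) = lam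
    rw [hμ'LP, Equiv.apply_symm_apply]
    exact hmap
  · -- backward direction
    rintro ⟨N, hN1, hexact⟩
    refine ⟨N, hN1, ?_⟩
    intro U hU hUne n hn
    rw [Set.eq_univ_iff_forall]
    intro x
    set V : Set (LevyProkhorov (ProbabilityMeasure X)) :=
      {ρ | 0 < (LevyProkhorov.toMeasureEquiv (α := ProbabilityMeasure X) ρ).toMeasure U} with hV
    have hVopen : IsOpen V := isOpen_pos_meas hU
    have hVne : V.Nonempty := by
      obtain ⟨y, hy⟩ := hUne
      refine ⟨(LevyProkhorov.toMeasureEquiv (α := ProbabilityMeasure X)).symm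
        (⟨Measure.dirac y, inferInstance⟩ : ProbabilityMeasure X), ?_⟩
      show 0 < (LevyProkhorov.toMeasureEquiv (α := ProbabilityMeasure X) _).toMeasure U
      show (0 : ℝ≥0∞) < Measure.dirac y U
      rw [Measure.dirac_apply_of_mem hy]
      norm_num
    have himg := hexact V hVopen hVne n hn
    set dxLP : LevyProkhorov (ProbabilityMeasure X) :=
      (LevyProkhorov.toMeasureEquiv (α := ProbabilityMeasure X)).symm (⟨Measure.dirac x, inferInstance⟩ : ProbabilityMeasure X)
      with hdxLP
    have hdx : dxLP ∈ nacomp (fun m => inducedMap (f m) (hf m)) n '' V := by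
      rw [himg]; trivial
    obtain ⟨ρ, hρV, hρeq⟩ := hdx
    set mρ := (LevyProkhorov.toMeasureEquiv (α := ProbabilityMeasure X) ρ).toMeasure with hmρ
    haveI : IsProbabilityMeasure mρ := (LevyProkhorov.toMeasureEquiv (α := ProbabilityMeasure X) ρ).2
    have hmm : mρ.map (nacomp f n) = Measure.dirac x := by
      have h2 := nacomp_induced f hf n ρ
      rw [hρeq] at h2
      rw [← h2, hdxLP]
      rfl
    have hpremeas : MeasurableSet ((nacomp f n) ⁻¹' {x}) :=
      (nacomp_continuous_s8 f hf n).measurable (measurableSet_singleton x)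
    have hpre : mρ ((nacomp f n) ⁻¹' {x}) = 1 := by
      rw [← Measure.map_apply (nacomp_continuous_s8 f hf n).measurable
        (measurableSet_singleton x), hmm]
      exact Measure.dirac_apply_of_mem rfl
    have hUpos : 0 < mρ U := hρV
    have hint : mρ (U ∩ (nacomp f n) ⁻¹' {x}) ≠ 0 := by
      intro h0
      have hc : mρ (((nacomp f n) ⁻¹' {x})ᶜ) = 0 := by
        rw [measure_compl hpremeas (measure_ne_top _ _), hpre, measure_univ, tsub_self]
      have hdiff : mρ (U \ (nacomp f n) ⁻¹' {x}) = 0 :=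
        measure_mono_null (diff_subset_compl _ _) hc
      have hle : mρ U ≤ mρ (U ∩ (nacomp f n) ⁻¹' {x}) + mρ (U \ (nacomp f n) ⁻¹' {x}) :=
        measure_le_inter_add_diff _ _ _
      rw [h0, hdiff, add_zero] at hle
      exact absurd (le_antisymm hle zero_le) hUpos.ne'
    obtain ⟨y, hyU, hypre⟩ := nonempty_of_measure_ne_zero hint
    exact ⟨y, hyU, by simpa using hypre⟩

end MainProof
end
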